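/- Let f, f₁, f₂, … be holomorphic self-maps of the open unit disc 𝔻 such that for each positive integer n and every z ∈ 𝔻 with ρ(z, 0) < 1 + ρ(f^{n−1}(0), 0) one has ρ(fₙ(z), f(z)) < 1/2ⁿ. Then the left compositions Fₙ = fₙ ∘ fₙ₋₁ ∘ ⋯ ∘ f₁ satisfy ρ(Fₙ(0), fⁿ(0)) < 1 − 1/2ⁿ for every positive integer n. -/

import Mathlib

open Complex Set Filter Metric

open scoped ComplexConjugate

/-- The open unit disc in the complex plane. -/
def unitDisc : Set ℂ := {z : ℂ | ‖z‖ < 1}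

/-- Inverse hyperbolic tangent. -/
noncomputable def artanh (x : ℝ) : ℝ := (1 / 2) * Real.log ((1 + x) / (1 - x))

/-- The hyperbolic distance on the unit disc, induced by the Riemannian metric
`2|dz|/(1-|z|²)`. -/
noncomputable def hdist (z w : ℂ) : ℝ :=
  2 * artanh ‖(z - w) / (1 - (starRingEnd ℂ) w * z)‖

/-- Left compositions: `leftComp f n = f (n-1) ∘ ⋯ ∘ f 1 ∘ f 0`, so that `f k`
plays the role of the `(k+1)`-st map `f_{k+1}` of the sequence. -/
def leftComp (f : ℕ → ℂ → ℂ) : ℕ → ℂ → ℂ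
  | 0 => id
  | n + 1 => f n ∘ leftComp f n

/-- Right compositions: `rightComp g n = g 0 ∘ g 1 ∘ ⋯ ∘ g (n-1)`, so that `g k`
plays the role of the `(k+1)`-st map `g_{k+1}` of the sequence. -/
def rightComp (g : ℕ → ℂ → ℂ) : ℕ → ℂ → ℂ
  | 0 => id
  | n + 1 => rightComp g n ∘ g n

/-! ### Auxiliary material -/

/-- pseudo-hyperbolic distance -/
noncomputable def pd (z w : ℂ) : ℝ := ‖(z - w) / (1 - conj w * z)‖

lemma hdist_eq (z w : ℂ) : hdist z w = 2 * artanh (pd z w) := rfl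

lemma pd_nonneg (z w : ℂ) : 0 ≤ pd z w := norm_nonneg _

lemma denom_ne_zero {z w : ℂ} (hz : z ∈ unitDisc) (hw : w ∈ unitDisc) :
    (1 : ℂ) - conj w * z ≠ 0 := by
  intro h
  have h1 : ‖conj w * z‖ < 1 := by
    rw [norm_mul, Complex.norm_conj]
    calc ‖w‖ * ‖z‖ ≤ 1 * ‖z‖ :=
          mul_le_mul_of_nonneg_right hw.le (norm_nonneg _)
      _ < 1 := by simpa using (show ‖z‖ < 1 from hz)
  have : conj w * z = 1 := by linear_combination -h
  rw [this] at h1; simp at h1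

lemma sq_key (z w : ℂ) :
    ‖1 - conj w * z‖ ^ 2 - ‖z - w‖ ^ 2
      = (1 - ‖z‖ ^ 2) * (1 - ‖w‖ ^ 2) := by
  simp only [Complex.sq_norm, Complex.normSq_apply, Complex.sub_re, Complex.sub_im,
    Complex.mul_re, Complex.mul_im, Complex.conj_re, Complex.conj_im, Complex.one_re,
    Complex.one_im, Complex.normSq_mk]
  ring

lemma pd_lt_one {z w : ℂ} (hz : z ∈ unitDisc) (hw : w ∈ unitDisc) : pd z w < 1 := by
  have hd := denom_ne_zero hz hw
  have hd' : 0 < ‖1 - conj w * z‖ := norm_pos_iff.mpr hd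
  rw [pd, norm_div, div_lt_one hd']
  have hk := sq_key z w
  have hz' : ‖z‖ < 1 := hz
  have hw' : ‖w‖ < 1 := hw
  have hz0 := norm_nonneg z
  have hw0 := norm_nonneg w
  have hpos : (0:ℝ) < (1 - ‖z‖ ^ 2) * (1 - ‖w‖ ^ 2) := by
    have e1 : (0:ℝ) < 1 - ‖z‖ ^ 2 := by nlinarith
    have e2 : (0:ℝ) < 1 - ‖w‖ ^ 2 := by nlinarith
    exact mul_pos e1 e2
  have h2 : ‖z - w‖ ^ 2 < ‖1 - conj w * z‖ ^ 2 := by linarith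
  exact lt_of_pow_lt_pow_left₀ 2 (norm_nonneg _) h2

lemma pd_symm (z w : ℂ) : pd z w = pd w z := by
  have h : (1 : ℂ) - conj z * w = conj (1 - conj w * z) := by
    simp only [map_sub, map_one, map_mul, Complex.conj_conj]; ring
  rw [pd, pd, norm_div, norm_div, norm_sub_rev, h, Complex.norm_conj]

lemma pd_zero_right (z : ℂ) : pd z 0 = ‖z‖ := by simp [pd]

/-- Möbius involution -/
noncomputable def moebius (u z : ℂ) : ℂ := (u - z) / (1 - conj u * z)

lemma abs_moebius (u z : ℂ) : ‖moebius u z‖ = pd z u := by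
  rw [moebius, pd, norm_div, norm_div, norm_sub_rev]

lemma moebius_mapsTo {u : ℂ} (hu : u ∈ unitDisc) : MapsTo (moebius u) unitDisc unitDisc := by
  intro z hz
  show ‖moebius u z‖ < 1
  rw [abs_moebius]
  exact pd_lt_one hz hu

lemma moebius_diff {u : ℂ} (hu : u ∈ unitDisc) : DifferentiableOn ℂ (moebius u) unitDisc := by
  apply DifferentiableOn.div
  · exact (differentiable_const u).differentiableOn.sub differentiableOn_id
  · exact ((differentiable_const _).differentiableOn.sub
      ((differentiable_const _).differentiableOn.mul differentiableOn_id))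
  · intro z hz; exact denom_ne_zero hz hu

lemma one_sub_conj_self_ne_zero {u : ℂ} (hu : u ∈ unitDisc) : (1 : ℂ) - conj u * u ≠ 0 :=
  denom_ne_zero hu hu

lemma moebius_invol {u z : ℂ} (hu : u ∈ unitDisc) (hz : z ∈ unitDisc) :
    moebius u (moebius u z) = z := by
  have h1 := denom_ne_zero hz hu
  have h4 := one_sub_conj_self_ne_zero hu
  have h4' : (1 : ℂ) - u * conj u ≠ 0 := by rwa [mul_comm]
  rw [moebius, moebius]
  rw [div_eq_iff, eq_comm]
  · have h1c : (1:ℂ) - z * conj u ≠ 0 := by rwa [mul_comm]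
    field_simp
    ring
  · rw [show (1:ℂ) - conj u * ((u - z) / (1 - conj u * z))
        = (1 - u * conj u) / (1 - conj u * z) by field_simp; ring]
    exact div_ne_zero h4' h1

lemma moebius_zero_right (u : ℂ) : moebius u 0 = u := by simp [moebius]

lemma pd_moebius {u z w : ℂ} (hu : u ∈ unitDisc) (hz : z ∈ unitDisc) (hw : w ∈ unitDisc) :
    pd (moebius u z) (moebius u w) = pd z w := by
  have h1 := denom_ne_zero hz hu
  have h2 := denom_ne_zero hw hu
  have h3 := denom_ne_zero hz hw
  have h4 := one_sub_conj_self_ne_zero hu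
  have h2' : (1 : ℂ) - u * conj w ≠ 0 := by
    intro h
    apply h2
    have := congrArg conj h
    simpa only [map_sub, map_one, map_mul, Complex.conj_conj, map_zero] using this
  have h4' : (1 : ℂ) - u * conj u ≠ 0 := by rwa [mul_comm]
  have h3' : (1 : ℂ) - conj w * z ≠ 0 := h3
  have hA : moebius u z - moebius u w
      = (z - w) * (u * conj u - 1) / ((1 - conj u * z) * (1 - conj u * w)) := by
    rw [moebius, moebius]
    rw [div_sub_div _ _ h1 h2]
    congr 1; ring
  have hB : 1 - conj (moebius u w) * moebius u z
      = (1 - u * conj u) * (1 - conj w * z) / ((1 - u * conj w) * (1 - conj u * z)) := by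
    rw [moebius, moebius]
    simp only [map_div₀, map_sub, map_one, map_mul, Complex.conj_conj]
    rw [div_mul_div_comm, one_sub_div (mul_ne_zero h2' h1)]
    congr 1; ring
  have key : (moebius u z - moebius u w) / (1 - conj (moebius u w) * moebius u z)
      = -(((z - w) / (1 - conj w * z)) * ((1 - u * conj w) / (1 - conj u * w))) := by
    rw [hA, hB]
    rw [div_div_div_eq, div_mul_div_comm, ← neg_div, div_eq_div_iff (mul_ne_zero (mul_ne_zero h1 h2) (mul_ne_zero h4' h3)) (mul_ne_zero h3 h2)]
    · ring
  have habs : ‖1 - u * conj w‖ = ‖1 - conj u * w‖ := by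
    have : (1 : ℂ) - u * conj w = conj (1 - conj u * w) := by
      simp only [map_sub, map_one, map_mul, Complex.conj_conj]
    rw [this, Complex.norm_conj]
  rw [pd, key, norm_neg, norm_mul, norm_div, norm_div, habs,
    div_self (norm_ne_zero_iff.mpr h2), mul_one, pd, norm_div]

lemma unitDisc_eq_ball : unitDisc = Metric.ball (0 : ℂ) 1 := by
  ext z
  simp [unitDisc, mem_ball_zero_iff]

lemma zero_mem_unitDisc : (0 : ℂ) ∈ unitDisc := by simp [unitDisc]

/-- Schwarz–Pick -/
lemma pd_schwarz_pick {f : ℂ → ℂ} (hf : DifferentiableOn ℂ f unitDisc)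
    (hm : MapsTo f unitDisc unitDisc) {z w : ℂ} (hz : z ∈ unitDisc) (hw : w ∈ unitDisc) :
    pd (f z) (f w) ≤ pd z w := by
  have hfw : f w ∈ unitDisc := hm hw
  set g : ℂ → ℂ := fun ζ => moebius (f w) (f (moebius w ζ)) with hg
  have hgd : DifferentiableOn ℂ g unitDisc := by
    apply DifferentiableOn.comp (moebius_diff hfw)
      (DifferentiableOn.comp hf (moebius_diff hw) (moebius_mapsTo hw))
    exact (hm.comp (moebius_mapsTo hw))
  have hgm : MapsTo g unitDisc unitDisc :=
    (moebius_mapsTo hfw).comp (hm.comp (moebius_mapsTo hw))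
  have hg0 : g 0 = 0 := by
    show moebius (f w) (f (moebius w 0)) = 0
    rw [moebius_zero_right, moebius, sub_self, zero_div]
  have hζ : moebius w z ∈ unitDisc := moebius_mapsTo hw hz
  have := Complex.norm_le_norm_of_mapsTo_ball
    (by rw [← unitDisc_eq_ball]; exact hgd)
    (by rw [← unitDisc_eq_ball]; exact hgm.mono_right (by rw [unitDisc_eq_ball]; exact Metric.ball_subset_closedBall)) hg0 hζ
  rw [hg] at this
  simp only [moebius_invol hw hz] at this
  rwa [abs_moebius, abs_moebius] at this

lemma key_ineq {a b : ℂ} (ha : a ∈ unitDisc) (hb : b ∈ unitDisc) :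
    ‖a - b‖ * (1 + ‖a‖ * ‖b‖)
      ≤ (‖a‖ + ‖b‖) * ‖1 - conj b * a‖ := by
  set p := ‖a‖ with hp
  set q := ‖b‖ with hq
  set A := ‖a - b‖ with hA
  set B := ‖1 - conj b * a‖ with hB
  have hp0 : 0 ≤ p := norm_nonneg _
  have hq0 : 0 ≤ q := norm_nonneg _
  have hA0 : 0 ≤ A := norm_nonneg _
  have hB0 : 0 ≤ B := norm_nonneg _
  have hp1 : p < 1 := ha
  have hq1 : q < 1 := hb
  have ht : -(p * q) ≤ (conj b * a).re := by
    have h1 : |(conj b * a).re| ≤ ‖conj b * a‖ := Complex.abs_re_le_norm _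
    have h2 : ‖conj b * a‖ = q * p := by rw [norm_mul, Complex.norm_conj]
    have := neg_abs_le (conj b * a).re
    nlinarith
  have hA2 : A ^ 2 = p ^ 2 + q ^ 2 - 2 * (conj b * a).re := by
    simp only [hA, hp, hq, Complex.sq_norm, Complex.normSq_apply, Complex.sub_re,
      Complex.sub_im, Complex.mul_re, Complex.mul_im, Complex.conj_re, Complex.conj_im]
    ring
  have hB2 : B ^ 2 = 1 - 2 * (conj b * a).re + p ^ 2 * q ^ 2 := by
    simp only [hB, hp, hq, Complex.sq_norm, Complex.normSq_apply, Complex.sub_re,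
      Complex.sub_im, Complex.mul_re, Complex.mul_im, Complex.conj_re, Complex.conj_im,
      Complex.one_re, Complex.one_im]
    ring
  have hsq : (A * (1 + p * q)) ^ 2 ≤ ((p + q) * B) ^ 2 := by
    have hprod : 0 ≤ 2 * ((1 - p ^ 2) * (1 - q ^ 2)) * ((conj b * a).re + p * q) := by
      have e1 : (0:ℝ) ≤ 1 - p ^ 2 := by nlinarith
      have e2 : (0:ℝ) ≤ 1 - q ^ 2 := by nlinarith
      have e3 : (0:ℝ) ≤ (conj b * a).re + p * q := by linarith
      have := mul_nonneg (mul_nonneg e1 e2) e3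
      linarith
    nlinarith [hA2, hB2]
  have h1pq : 0 ≤ (p + q) * B := mul_nonneg (by linarith) hB0
  exact le_of_pow_le_pow_left₀ two_ne_zero h1pq hsq

lemma pd_triangle_zero {a b : ℂ} (ha : a ∈ unitDisc) (hb : b ∈ unitDisc) :
    pd a b ≤ (‖a‖ + ‖b‖) / (1 + ‖a‖ * ‖b‖) := by
  have hd : 0 < ‖1 - conj b * a‖ := norm_pos_iff.mpr (denom_ne_zero ha hb)
  have hpq : (0:ℝ) < 1 + ‖a‖ * ‖b‖ := by
    have := mul_nonneg (norm_nonneg a) (norm_nonneg b); linarith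
  rw [pd, norm_div, div_le_div_iff₀ hd hpq]
  exact key_ineq ha hb

lemma pd_triangle {z u w : ℂ} (hz : z ∈ unitDisc) (hu : u ∈ unitDisc) (hw : w ∈ unitDisc) :
    pd z w ≤ (pd z u + pd u w) / (1 + pd z u * pd u w) := by
  have ha : moebius u z ∈ unitDisc := moebius_mapsTo hu hz
  have hb : moebius u w ∈ unitDisc := moebius_mapsTo hu hw
  have h := pd_triangle_zero ha hb
  rw [pd_moebius hu hz hw] at h
  rw [abs_moebius, abs_moebius] at h
  rwa [pd_symm w u] at h

lemma artanh_le_artanh {x y : ℝ} (hx : 0 ≤ x) (hxy : x ≤ y) (hy : y < 1) :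
    artanh x ≤ artanh y := by
  have hx1 : x < 1 := lt_of_le_of_lt hxy hy
  have h1 : (0:ℝ) < (1 + x) / (1 - x) := div_pos (by linarith) (by linarith)
  have h2 : (1 + x) / (1 - x) ≤ (1 + y) / (1 - y) := by
    rw [div_le_div_iff₀ (by linarith) (by linarith)]
    nlinarith
  exact mul_le_mul_of_nonneg_left (Real.log_le_log h1 h2) (by norm_num)

lemma artanh_add {x y : ℝ} (hx : 0 ≤ x) (hx1 : x < 1) (hy : 0 ≤ y) (hy1 : y < 1) :
    artanh ((x + y) / (1 + x * y)) = artanh x + artanh y := by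
  have hxy : (0:ℝ) < 1 + x * y := by nlinarith
  have hxy' : (1:ℝ) + x * y ≠ 0 := ne_of_gt hxy
  have h1 : (0:ℝ) < (1 + x) / (1 - x) := div_pos (by linarith) (by linarith)
  have h2 : (0:ℝ) < (1 + y) / (1 - y) := div_pos (by linarith) (by linarith)
  have key : (1 + (x + y) / (1 + x * y)) / (1 - (x + y) / (1 + x * y))
      = ((1 + x) / (1 - x)) * ((1 + y) / (1 - y)) := by
    have hnum : 1 + (x + y) / (1 + x * y) = (1 + x) * (1 + y) / (1 + x * y) := by
      field_simp; ring
    have hden : 1 - (x + y) / (1 + x * y) = (1 - x) * (1 - y) / (1 + x * y) := by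
      field_simp; ring
    rw [hnum, hden, div_div_div_comm, div_self hxy', div_one, div_mul_div_comm]
  rw [artanh, key, Real.log_mul (ne_of_gt h1) (ne_of_gt h2), artanh, artanh]
  ring

lemma artanh_nonneg {x : ℝ} (hx : 0 ≤ x) (hx1 : x < 1) : 0 ≤ artanh x := by
  apply mul_nonneg (by norm_num)
  apply Real.log_nonneg
  rw [le_div_iff₀ (by linarith)]
  linarith

lemma hdist_nonneg {z w : ℂ} (hz : z ∈ unitDisc) (hw : w ∈ unitDisc) : 0 ≤ hdist z w := by
  rw [hdist_eq]
  have := artanh_nonneg (pd_nonneg z w) (pd_lt_one hz hw)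
  linarith

lemma hdist_triangle {z u w : ℂ} (hz : z ∈ unitDisc) (hu : u ∈ unitDisc) (hw : w ∈ unitDisc) :
    hdist z w ≤ hdist z u + hdist u w := by
  rw [hdist_eq, hdist_eq, hdist_eq]
  set p := pd z u with hp
  set q := pd u w with hq
  have hp0 : 0 ≤ p := pd_nonneg _ _
  have hq0 : 0 ≤ q := pd_nonneg _ _
  have hp1 : p < 1 := pd_lt_one hz hu
  have hq1 : q < 1 := pd_lt_one hu hw
  have hs1 : (p + q) / (1 + p * q) < 1 := by
    rw [div_lt_one (by nlinarith)]
    nlinarith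
  have h1 : artanh (pd z w) ≤ artanh ((p + q) / (1 + p * q)) :=
    artanh_le_artanh (pd_nonneg _ _) (pd_triangle hz hu hw) hs1
  rw [artanh_add hp0 hp1 hq0 hq1] at h1
  linarith

lemma hdist_schwarz_pick {f : ℂ → ℂ} (hf : DifferentiableOn ℂ f unitDisc)
    (hm : MapsTo f unitDisc unitDisc) {z w : ℂ} (hz : z ∈ unitDisc) (hw : w ∈ unitDisc) :
    hdist (f z) (f w) ≤ hdist z w := by
  rw [hdist_eq, hdist_eq]
  have := artanh_le_artanh (pd_nonneg _ _) (pd_schwarz_pick hf hm hz hw) (pd_lt_one hz hw)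
  linarith

lemma hdist_zero_zero : hdist (0 : ℂ) 0 = 0 := by
  simp [hdist, artanh]

/-- **The inductive estimate in the proof of Theorem 5.** Indices are shifted:
`fseq n` is the map `f_{n+1}`, so the hypothesis for index n states that f_{n+1} is
within 1/2^(n+1) of f on the hyperbolic disc of radius 1 + ρ(f^[n] 0, 0) about 0, and
the conclusion for index n is ρ(F_{n+1}(0), f^[n+1](0)) < 1 - 1/2^(n+1), i.e. the claim
for the positive integer m = n+1. -/
theorem boundary_DW_induction_estimate
    (f : ℂ → ℂ) (fseq : ℕ → ℂ → ℂ)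
    (hf : DifferentiableOn ℂ f unitDisc) (hfmap : MapsTo f unitDisc unitDisc)
    (hholo : ∀ n, DifferentiableOn ℂ (fseq n) unitDisc)
    (hself : ∀ n, MapsTo (fseq n) unitDisc unitDisc)
    (hclose : ∀ n : ℕ, ∀ z ∈ unitDisc,
      hdist z 0 < 1 + hdist (f^[n] 0) 0 → hdist (fseq n z) (f z) < 1 / 2 ^ (n + 1)) :
    ∀ n : ℕ, hdist (leftComp fseq (n + 1) 0) (f^[n + 1] 0) < 1 - 1 / 2 ^ (n + 1) := by
  have hit : ∀ n : ℕ, f^[n] 0 ∈ unitDisc := by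
    intro n
    induction n with
    | zero => exact zero_mem_unitDisc
    | succ k ih => rw [Function.iterate_succ_apply']; exact hfmap ih
  have hFmem : ∀ n : ℕ, leftComp fseq n 0 ∈ unitDisc := by
    intro n
    induction n with
    | zero => exact zero_mem_unitDisc
    | succ k ih => exact hself k ih
  intro n
  induction n with
  | zero =>
    have h := hclose 0 0 zero_mem_unitDisc
      (by rw [Function.iterate_zero_apply, hdist_zero_zero]; linarith)
    have e1 : leftComp fseq 1 0 = fseq 0 0 := rfl
    have e2 : f^[1] 0 = f 0 := by simp
    rw [e1, e2]
    norm_num at h ⊢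
    linarith
  | succ k ih =>
    set w := leftComp fseq (k + 1) 0 with hwdef
    set p := f^[k + 1] 0 with hpdef
    have hw : w ∈ unitDisc := hFmem (k + 1)
    have hp : p ∈ unitDisc := hit (k + 1)
    have hF2 : leftComp fseq (k + 2) 0 = fseq (k + 1) w := rfl
    have hf2 : f^[k + 2] 0 = f p := by rw [hpdef]; rw [Function.iterate_succ_apply']
    rw [hF2, hf2]
    have hcond : hdist w 0 < 1 + hdist (f^[k + 1] 0) 0 := by
      have ht := hdist_triangle hw hp zero_mem_unitDisc
      have hp0 : 0 ≤ hdist p 0 := hdist_nonneg hp zero_mem_unitDisc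
      have h2 : (0:ℝ) < 1 / 2 ^ (k + 1) := by positivity
      rw [← hpdef]
      linarith
    have h1 : hdist (fseq (k + 1) w) (f w) < 1 / 2 ^ (k + 2) := hclose (k + 1) w hw hcond
    have h2 : hdist (f w) (f p) ≤ hdist w p := hdist_schwarz_pick hf hfmap hw hp
    have h3 : hdist (fseq (k + 1) w) (f p) ≤ hdist (fseq (k + 1) w) (f w) + hdist (f w) (f p) :=
      hdist_triangle (hself (k + 1) hw) (hfmap hw) (hfmap hp)
    have hhalf : (1:ℝ) / 2 ^ (k + 2) = (1 / 2 ^ (k + 1)) / 2 := by ring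
    calc hdist (fseq (k + 1) w) (f p)
        ≤ hdist (fseq (k + 1) w) (f w) + hdist (f w) (f p) := h3
      _ < 1 / 2 ^ (k + 2) + (1 - 1 / 2 ^ (k + 1)) := by linarith
      _ = 1 - 1 / 2 ^ (k + 2) := by rw [hhalf]; ring
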